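/- arXiv:1411.3500 — 6 statements merged into one kernel-verified Lean document; each statement's English description precedes it below -/
import Mathlib

section
/- Let E be a complete locally convex Hausdorff space and Λ a Hilbert sequence space. Then every Λ-frame (g_i) ⊆ E' for E is automatically a frame for E with respect to Λ, i.e. the range U(E) of the analysis operator is complemented in Λ. -/
/-!
STATEMENT 3: If `E` is a complete Hausdorff locally convex space and `Λ` is a Hilbert
sequence space, then every `Λ`-frame `(g_i) ⊆ E'` for `E` is automatically a frame for `E`
with respect to `Λ`: the range of the analysis operator `U` is complemented in `Λ`,
equivalently there is a continuous linear `S : Λ → E` with `S ∘ U = id_E`. -/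

open Filter Topology

theorem stmt3 {E Λ : Type*}
    -- `E` a complete Hausdorff locally convex space
    [AddCommGroup E] [Module ℝ E] [UniformSpace E] [IsUniformAddGroup E]
    [ContinuousSMul ℝ E] [CompleteSpace E] [T2Space E] [LocallyConvexSpace ℝ E]
    -- `Λ` a Hilbert sequence space
    [NormedAddCommGroup Λ] [InnerProductSpace ℝ Λ] [CompleteSpace Λ]
    (ι : Λ →L[ℝ] (ℕ → ℝ)) (hι : Function.Injective ι)
    (hφ : ∀ y : ℕ → ℝ, (Function.support y).Finite → ∃ a : Λ, ι a = y)
    -- the `Λ`-frame `(g_i)` with analysis operator `U`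
    (g : ℕ → E →L[ℝ] ℝ) (U : E →L[ℝ] Λ) (hUg : ∀ x i, ι (U x) i = g i x)
    (hframe : IsEmbedding U) :
    ∃ S : Λ →L[ℝ] E, S.comp U = ContinuousLinearMap.id ℝ E := by
  have hinj : Function.Injective U := hframe.injective
  -- `U` is a uniform embedding (uniformities of topological groups are canonical)
  have hui : IsUniformInducing U := by
    have h1 : (‹UniformSpace E› : UniformSpace E) =
        (inferInstance : UniformSpace Λ).comap U := by
      refine IsUniformAddGroup.ext inferInstance (IsUniformAddGroup.comap U) ?_
      refine Eq.trans ((hframe.isInducing.nhds_eq_comap 0).trans (by rw [map_zero]))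
        (Eq.symm ?_)
      show @nhds E (UniformSpace.comap (⇑U) inferInstance).toTopologicalSpace 0 =
        comap U (𝓝 (0 : Λ))
      rw [UniformSpace.toTopologicalSpace_comap]
      rw [nhds_induced U 0, map_zero]
    exact ⟨((congrArg (fun u : UniformSpace E => @uniformity E u) h1).trans rfl).symm⟩
  -- the range of `U` is a complete, hence closed, subspace of `Λ`
  set K : Submodule ℝ Λ := LinearMap.range (U : E →ₗ[ℝ] Λ) with hKdef
  have hKcomplete : IsComplete (K : Set Λ) := by
    simpa [hKdef, ContinuousLinearMap.range_coeFn_eq, LinearMap.coe_range] using hui.isComplete_range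
  have hKclosed : IsClosed (K : Set Λ) := hKcomplete.isClosed
  haveI : CompleteSpace K := hKcomplete.completeSpace_coe
  -- the continuous linear equivalence `E ≃L K`
  have hmem : ∀ x : E, U x ∈ K := fun x => LinearMap.mem_range_self _ x
  let e₀ : E ≃ₗ[ℝ] K := LinearEquiv.ofInjective (U : E →ₗ[ℝ] Λ) hinj
  have he₀ : ∀ x : E, (e₀ x : Λ) = U x := fun x => rfl
  have hsymm_cont : Continuous e₀.symm := by
    rw [hframe.isInducing.continuous_iff]
    have : (U : E → Λ) ∘ e₀.symm = Subtype.val := by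
      funext y
      simp only [Function.comp_apply]
      rw [← he₀ (e₀.symm y), e₀.apply_symm_apply]
    rw [this]
    exact continuous_subtype_val
  let e : E ≃L[ℝ] K :=
    { e₀ with
      continuous_toFun := Continuous.subtype_mk U.continuous _
      continuous_invFun := hsymm_cont }
  -- the synthesis operator: inverse of `e` composed with the orthogonal projection
  refine ⟨(e.symm : K →L[ℝ] E).comp ((K.orthogonalProjection : Λ →L[ℝ] K)), ?_⟩
  ext x
  have h2 : K.orthogonalProjection (U x) = e x := by
    have : (U x : Λ) = ((e x : K) : Λ) := rfl
    rw [this, Submodule.orthogonalProjection_mem_subspace_eq_self]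
  simp only [ContinuousLinearMap.comp_apply, ContinuousLinearMap.coe_coe,
    ContinuousLinearMap.id_apply, h2]
  exact e.symm_apply_apply x
end

section
/- Let E be a barrelled locally convex space, Λ₁, Λ₂ sequence spaces, (g_i) ⊆ E' a Λ₁-Bessel sequence and (h_i) ⊆ E' a Λ₂-frame. Define (f_k) ⊆ E' by f_{2i-1} = g_i and f_{2i} = h_i, and let Λ = { (α_k) ∈ ω : (α_{2k-1}) ∈ Λ₁ and (α_{2k}) ∈ Λ₂ } with the seminorms ‖α‖_{p,q} = p((α_{2k-1})_k) + q((α_{2k})_k) for p ∈ cs(Λ₁), q ∈ cs(Λ₂). Then (f_k) is a Λ-frame for E. -/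
/-!
STATEMENT 4: Let `E` be barrelled, `(g_i)` a `Λ₁`-Bessel sequence and `(h_i)` a `Λ₂`-frame
in `E'`.  Interleave them into `(f_k)` (`f_{2i-1} = g_i`, `f_{2i} = h_i`) and let
`Λ = {α : (α_{2k-1}) ∈ Λ₁, (α_{2k}) ∈ Λ₂}` with the seminorms
`‖α‖_{p,q} = p((α_{2k-1})) + q((α_{2k}))`.  Then `(f_k)` is a `Λ`-frame for `E`.

The sequence space `Λ` with these seminorms is canonically topologically isomorphic to the
product `Λ₁ × Λ₂` (odd/even coordinates), under which the analysis operator of `(f_k)`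
becomes `x ↦ (U₁ x, U₂ x)`; so the `Λ`-frame property is that this map is an embedding. -/

open Filter Topology

theorem stmt4 {E Λ₁ Λ₂ : Type*}
    [AddCommGroup E] [Module ℝ E] [TopologicalSpace E] [IsTopologicalAddGroup E]
    [ContinuousSMul ℝ E] [T2Space E] [LocallyConvexSpace ℝ E] [BarrelledSpace ℝ E]
    [AddCommGroup Λ₁] [Module ℝ Λ₁] [TopologicalSpace Λ₁] [IsTopologicalAddGroup Λ₁]
    [ContinuousSMul ℝ Λ₁] [T2Space Λ₁] [LocallyConvexSpace ℝ Λ₁]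
    [AddCommGroup Λ₂] [Module ℝ Λ₂] [TopologicalSpace Λ₂] [IsTopologicalAddGroup Λ₂]
    [ContinuousSMul ℝ Λ₂] [T2Space Λ₂] [LocallyConvexSpace ℝ Λ₂]
    -- `Λ₁`, `Λ₂` are sequence spaces
    (ι₁ : Λ₁ →L[ℝ] (ℕ → ℝ)) (hι₁ : Function.Injective ι₁)
    (hφ₁ : ∀ y : ℕ → ℝ, (Function.support y).Finite → ∃ a : Λ₁, ι₁ a = y)
    (ι₂ : Λ₂ →L[ℝ] (ℕ → ℝ)) (hι₂ : Function.Injective ι₂)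
    (hφ₂ : ∀ y : ℕ → ℝ, (Function.support y).Finite → ∃ a : Λ₂, ι₂ a = y)
    -- `(g_i)` is `Λ₁`-Bessel: its analysis operator `U₁` is continuous
    (g : ℕ → E →L[ℝ] ℝ) (U₁ : E →L[ℝ] Λ₁) (hU₁ : ∀ x i, ι₁ (U₁ x) i = g i x)
    -- `(h_i)` is a `Λ₂`-frame: its analysis operator `U₂` is an embedding
    (h : ℕ → E →L[ℝ] ℝ) (U₂ : E →L[ℝ] Λ₂) (hU₂ : ∀ x i, ι₂ (U₂ x) i = h i x)
    (hframe₂ : IsEmbedding U₂) :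
    -- the interleaved analysis operator is an embedding, i.e. `(f_k)` is a `Λ`-frame
    IsEmbedding (fun x : E => ((U₁ x, U₂ x) : Λ₁ × Λ₂)) := by
  have hf : Continuous (fun x : E => ((U₁ x, U₂ x) : Λ₁ × Λ₂)) :=
    (U₁.continuous.prodMk U₂.continuous)
  have hcomp : (fun p : Λ₁ × Λ₂ => p.2) ∘ (fun x : E => ((U₁ x, U₂ x) : Λ₁ × Λ₂)) = U₂ := rfl
  exact IsEmbedding.of_comp hf continuous_snd (hcomp ▸ hframe₂)
end

section
/- Let E be a barrelled and complete locally convex Hausdorff space with a Schauder frame ((x_i'), (x_i)) and let Λ = { α ∈ ω : Σ_i α_i x_i converges in E } with seminorms q_p(α) = sup_n p(Σ_{i=1}^n α_i x_i) for p ∈ cs(E). Then (x_i') is a frame for E with respect to Λ: the analysis operator U : E → Λ, x ↦ (x_i'(x))_i, and the synthesis operator S : Λ → E, α ↦ Σ_i α_i x_i, are continuous and satisfy S ∘ U = id_E. -/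
/-!
STATEMENT 5: Let `E` be a barrelled complete Hausdorff locally convex space with a Schauder
frame `((x_i'), (x_i))` and let `Λ = {α ∈ ω : ∑ α_i x_i converges in E}` with the seminorms
`q_p(α) = sup_n p(∑_{i<n} α_i x_i)`, `p ∈ cs(E)`.  Then `(x_i')` is a frame for `E` with
respect to `Λ`: the analysis operator `U x = (x_i'(x))_i` and the synthesis operator
`S α = ∑ α_i x_i` are continuous linear and `S ∘ U = id_E`.

The topology of `Λ` given by the seminorms `q_p` is the topology induced by the map
`α ↦ (partial sums of ∑ αᵢ xᵢ)` into `ℕ →ᵤ E` (uniform convergence over `n`). -/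

open Filter Topology

variable {E : Type*} [AddCommGroup E] [Module ℝ E] [UniformSpace E] [IsUniformAddGroup E]
  [ContinuousSMul ℝ E]

/-- The sequence space associated to the family `(x_i)`:
all `α` such that `∑ αᵢ xᵢ` converges in `E`. -/
noncomputable def SFSeq (x : ℕ → E) : Submodule ℝ (ℕ → ℝ) where
  carrier := {α | ∃ l : E,
    Tendsto (fun n => ∑ i ∈ Finset.range n, α i • x i) atTop (𝓝 l)}
  zero_mem' := ⟨0, by simpa using (tendsto_const_nhds : Tendsto (fun _ : ℕ => (0:E)) atTop _)⟩
  add_mem' := by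
    rintro a b ⟨l, hl⟩ ⟨m, hm⟩
    exact ⟨l + m, by simpa [Finset.sum_add_distrib, add_smul] using hl.add hm⟩
  smul_mem' := by
    rintro c a ⟨l, hl⟩
    refine ⟨c • l, ?_⟩
    simpa [Finset.smul_sum, smul_smul] using hl.const_smul c

/-- The topology of `Λ` given by the seminorms `q_p(α) = sup_n p(∑_{i<n} αᵢ xᵢ)`:
the topology induced from uniform convergence of the partial-sum sequences. -/
noncomputable def SFSeqTop (x : ℕ → E) : TopologicalSpace (SFSeq x) :=
  TopologicalSpace.induced
    (fun α : SFSeq x =>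
      UniformFun.ofFun fun n => ∑ i ∈ Finset.range n, (α : ℕ → ℝ) i • x i)
    inferInstance

theorem stmt5 [CompleteSpace E] [T2Space E] [LocallyConvexSpace ℝ E] [BarrelledSpace ℝ E]
    (x' : ℕ → E →L[ℝ] ℝ) (x : ℕ → E)
    -- `((x_i'), (x_i))` is a Schauder frame of `E`
    (hSF : ∀ v : E,
      Tendsto (fun n => ∑ i ∈ Finset.range n, x' i v • x i) atTop (𝓝 v)) :
    ∃ (U : E →ₗ[ℝ] SFSeq x) (S : SFSeq x →ₗ[ℝ] E),
      (∀ v i, (U v : ℕ → ℝ) i = x' i v) ∧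
      (∀ α : SFSeq x,
        Tendsto (fun n => ∑ i ∈ Finset.range n, (α : ℕ → ℝ) i • x i) atTop (𝓝 (S α))) ∧
      Continuous[_, SFSeqTop x] U ∧
      Continuous[SFSeqTop x, _] S ∧
      ∀ v : E, S (U v) = v := by
  classical
  -- the embedding into `ℕ →ᵤ E`
  set e : SFSeq x → UniformFun ℕ E := fun α =>
    UniformFun.ofFun fun n => ∑ i ∈ Finset.range n, (α : ℕ → ℝ) i • x i with he
  -- the synthesis map as a function : the limit of the partial sums
  have Sfun_ex : ∀ α : SFSeq x, ∃ l : E,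
      Tendsto (fun n => ∑ i ∈ Finset.range n, (α : ℕ → ℝ) i • x i) atTop (𝓝 l) :=
    fun α => α.2
  choose Sfun hS using Sfun_ex
  -- the analysis operator
  refine ⟨{ toFun := fun v => ⟨fun i => x' i v, ⟨v, hSF v⟩⟩
            map_add' := fun v w => by ext i; simp
            map_smul' := fun c v => by ext i; simp },
          { toFun := Sfun
            map_add' := fun a b => ?_
            map_smul' := fun c a => ?_ }, fun v i => rfl, hS, ?_, ?_, ?_⟩
  · refine tendsto_nhds_unique (hS (a + b)) ?_
    have := (hS a).add (hS b)
    simpa [add_smul, Finset.sum_add_distrib] using this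
  · refine tendsto_nhds_unique (hS (c • a)) ?_
    have := (hS a).const_smul c
    simpa [Finset.smul_sum, smul_smul] using this
  · -- continuity of the analysis operator
    show Continuous[_, TopologicalSpace.induced
      (fun α : SFSeq x =>
        UniformFun.ofFun fun n => ∑ i ∈ Finset.range n, (α : ℕ → ℝ) i • x i)
      inferInstance] _
    refine continuous_induced_rng.mpr ?_
    -- the partial-sum operators
    set T : ℕ → E →L[ℝ] E := fun n => ∑ i ∈ Finset.range n, (x' i).smulRight (x i) with hT
    have hTapp : ∀ n v, T n v = ∑ i ∈ Finset.range n, x' i v • x i := by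
      intro n v; simp [hT]
    have hq : WithSeminorms (gaugeSeminormFamily ℝ E) := with_gaugeSeminormFamily (𝕜 := ℝ) (E := E)
    have hBS : UniformEquicontinuous ((↑) ∘ T) := by
      refine hq.banach_steinhaus fun k v => ?_
      have h1 : Tendsto (fun n => gaugeSeminormFamily ℝ E k (T n v)) atTop
          (𝓝 (gaugeSeminormFamily ℝ E k v)) := by
        refine ((hq.continuous_seminorm k).tendsto v).comp ?_
        simpa [hTapp] using hSF v
      exact h1.bddAbove_range
    have hcont := equicontinuous_iff_continuous.mp hBS.equicontinuous
    have : (UniformFun.ofFun ∘ Function.swap ((↑) ∘ T) : E → UniformFun ℕ E) =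
        fun v => UniformFun.ofFun fun n => ∑ i ∈ Finset.range n, x' i v • x i := by
      funext v; exact congrArg UniformFun.ofFun (funext fun n => hTapp n v)
    rw [this] at hcont
    exact hcont
  · -- continuity of the synthesis operator
    letI := SFSeqTop x
    have hnhds : ∀ α : SFSeq x, 𝓝 α = Filter.comap e (𝓝 (e α)) := fun α =>
      nhds_induced e α
    rw [continuous_iff_continuousAt]
    intro α
    rw [ContinuousAt, hnhds α,
      ((UniformFun.hasBasis_nhds ℕ E (e α)).comap e).tendsto_iff
        (nhds_basis_uniformity' uniformity_hasBasis_closed)]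
    rintro V ⟨hV, hVc⟩
    refine ⟨V, hV, fun β hβ => ?_⟩
    have hmem : ∀ n, (UniformFun.toFun (e α) n, UniformFun.toFun (e β) n) ∈ V := hβ
    have htend : Tendsto (fun n => (UniformFun.toFun (e α) n, UniformFun.toFun (e β) n))
        atTop (𝓝 (Sfun α, Sfun β)) := (hS α).prodMk_nhds (hS β)
    have : (Sfun α, Sfun β) ∈ V :=
      hVc.mem_of_tendsto htend (Filter.Eventually.of_forall hmem)
    exact this
  · -- S ∘ U = id
    intro v
    exact tendsto_nhds_unique (hS ⟨fun i => x' i v, ⟨v, hSF v⟩⟩) (hSF v)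
end

section
/- Let E be a barrelled locally convex space and Λ a barrelled sequence space whose unit vectors form a Schauder basis. If (g_i) ⊆ E' is a Λ-Bessel sequence which is also a Λ'-representing system for (E', μ(E',E)), then (g_i) is a frame in the weak sense: the analysis operator U : (E, σ(E,E')) → (Λ, σ(Λ,Λ')) is a topological isomorphism onto its range. -/
/-!
STATEMENT 8: For `E` barrelled and `Λ` a barrelled sequence space whose unit vectors form a
Schauder basis, if `(g_i) ⊆ E'` is `Λ`-Bessel and a `Λ'`-representing system for
`(E', μ(E',E))`, then the analysis operator `U : (E, σ(E,E')) → (Λ, σ(Λ,Λ'))` is a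
topological isomorphism onto its range (an embedding for the weak topologies). -/

open Filter Topology

/-- The weak topology `σ(E, E')`. -/
noncomputable def weakTop (E : Type*) [AddCommGroup E] [Module ℝ E] [TopologicalSpace E] :
    TopologicalSpace E :=
  TopologicalSpace.induced (fun x => fun f : E →L[ℝ] ℝ => f x) Pi.topologicalSpace

/-- The Mackey topology `μ(E', E)` on the dual: uniform convergence on absolutely convex
weakly compact subsets of `E`. -/
noncomputable def mackeyTop (E : Type*) [AddCommGroup E] [Module ℝ E] [TopologicalSpace E] :
    TopologicalSpace (E →L[ℝ] ℝ) :=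
  ⨅ K : {K : Set E // Convex ℝ K ∧ Balanced ℝ K ∧ @IsCompact E (weakTop E) K},
    TopologicalSpace.induced (fun f => UniformFun.ofFun fun x : K.1 => f x) inferInstance

lemma weakTop_eq (E : Type*) [AddCommGroup E] [Module ℝ E] [TopologicalSpace E] :
    weakTop E = ⨅ f : E →L[ℝ] ℝ,
      TopologicalSpace.induced (fun x => f x) inferInstance := by
  rw [weakTop, Pi.topologicalSpace, induced_iInf]
  exact iInf_congr fun f => by rw [induced_compose]; rfl

private lemma contComp {X Y Z : Type*} {tX : TopologicalSpace X} {tY : TopologicalSpace Y}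
    {tZ : TopologicalSpace Z} {g : Y → Z} {f : X → Y} (hg : Continuous g)
    (hf : Continuous f) : Continuous fun x => g (f x) :=
  hg.comp hf

lemma mackey_eval_continuous {E : Type*} [AddCommGroup E] [Module ℝ E] [TopologicalSpace E]
    [IsTopologicalAddGroup E] [ContinuousSMul ℝ E] (x : E) :
    @Continuous _ _ (mackeyTop E) _ (fun f : E →L[ℝ] ℝ => f x) := by
  set K : Set E := (fun t : ℝ => t • x) '' Set.Icc (-1) 1 with hKdef
  have hconv : Convex ℝ K :=
    (convex_Icc (-1 : ℝ) 1).linear_image (LinearMap.toSpanSingleton ℝ E x)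
  have hbal : Balanced ℝ K := by
    intro a ha y hy
    rw [Set.mem_smul_set] at hy
    obtain ⟨z, ⟨t, ht, rfl⟩, rfl⟩ := hy
    refine ⟨a * t, ?_, by rw [smul_smul]⟩
    rw [Set.mem_Icc, ← abs_le] at ht ⊢
    calc |a * t| = |a| * |t| := abs_mul a t
      _ ≤ 1 * 1 := by
        exact mul_le_mul (by simpa using ha) ht (abs_nonneg t) zero_le_one
      _ = 1 := one_mul 1
  have hid : @Continuous E E _ (weakTop E) id :=
    continuous_induced_rng.2 (continuous_pi fun f => f.continuous)
  have hc : @Continuous ℝ E _ (weakTop E) (fun t : ℝ => t • x) :=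
    contComp hid (continuous_id.smul continuous_const)
  have hcomp : @IsCompact E (weakTop E) K :=
    @IsCompact.image ℝ E _ (weakTop E) _ _ isCompact_Icc hc
  have hx : x ∈ K := ⟨1, by simp, one_smul ℝ x⟩
  have hK : mackeyTop E ≤ TopologicalSpace.induced
      (fun f : E →L[ℝ] ℝ => UniformFun.ofFun fun y : K => f y) inferInstance :=
    by unfold mackeyTop; exact iInf_le (fun K : {K : Set E // Convex ℝ K ∧ Balanced ℝ K ∧ @IsCompact E (weakTop E) K} =>
      TopologicalSpace.induced (fun f : E →L[ℝ] ℝ => UniformFun.ofFun fun x : K.1 => f x) inferInstance) ⟨K, hconv, hbal, hcomp⟩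
  have h1 : Continuous (fun u : UniformFun K ℝ => Function.eval (⟨x, hx⟩ : K) (UniformFun.toFun u)) :=
    (UniformFun.uniformContinuous_eval ℝ (⟨x, hx⟩ : K)).continuous
  have h2 : @Continuous (E →L[ℝ] ℝ) (UniformFun K ℝ) (mackeyTop E) _
      (fun f => UniformFun.ofFun fun y : K => f y) :=
    continuous_le_dom hK continuous_induced_dom
  exact contComp h1 h2

theorem stmt8 {E Λ : Type*}
    [AddCommGroup E] [Module ℝ E] [TopologicalSpace E] [IsTopologicalAddGroup E]
    [ContinuousSMul ℝ E] [T2Space E] [LocallyConvexSpace ℝ E] [BarrelledSpace ℝ E]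
    [AddCommGroup Λ] [Module ℝ Λ] [TopologicalSpace Λ] [IsTopologicalAddGroup Λ]
    [ContinuousSMul ℝ Λ] [T2Space Λ] [LocallyConvexSpace ℝ Λ] [BarrelledSpace ℝ Λ]
    (ι : Λ →L[ℝ] (ℕ → ℝ)) (hι : Function.Injective ι)
    (hφ : ∀ y : ℕ → ℝ, (Function.support y).Finite → ∃ a : Λ, ι a = y)
    (e : ℕ → Λ) (he : ∀ i, ι (e i) = Pi.single i 1)
    (hbasis : ∀ a : Λ,
      Tendsto (fun n => ∑ i ∈ Finset.range n, ι a i • e i) atTop (𝓝 a))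
    -- `(g_i)` is `Λ`-Bessel, with analysis operator `U`
    (g : ℕ → E →L[ℝ] ℝ) (U : E →L[ℝ] Λ) (hUg : ∀ x i, ι (U x) i = g i x)
    -- `(g_i)` is a `Λ'`-representing system for `(E', μ(E',E))`
    (hrep : ∀ x' : E →L[ℝ] ℝ, ∃ h : Λ →L[ℝ] ℝ,
      Tendsto (fun n => ∑ i ∈ Finset.range n, h (e i) • g i) atTop
        (@nhds _ (mackeyTop E) x')) :
    @IsEmbedding E Λ (weakTop E) (weakTop Λ) U := by
  -- Key: every x' factors through U
  have key : ∀ x' : E →L[ℝ] ℝ, ∃ h : Λ →L[ℝ] ℝ, ∀ x, x' x = h (U x) := by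
    intro x'
    obtain ⟨h, hh⟩ := hrep x'
    refine ⟨h, fun x => ?_⟩
    have h1 : Tendsto (fun n => (∑ i ∈ Finset.range n, h (e i) • g i) x) atTop (𝓝 (x' x)) :=
      (@Continuous.tendsto _ _ (mackeyTop E) _ _ (mackey_eval_continuous x) x').comp hh
    have heq : ∀ n, (∑ i ∈ Finset.range n, h (e i) • g i) x
        = h (∑ i ∈ Finset.range n, ι (U x) i • e i) := by
      intro n
      rw [map_sum]
      simp only [ContinuousLinearMap.sum_apply, ContinuousLinearMap.smul_apply, map_smul,
        smul_eq_mul, hUg]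
      exact Finset.sum_congr rfl fun i _ => mul_comm _ _
    have h2 : Tendsto (fun n => (∑ i ∈ Finset.range n, h (e i) • g i) x) atTop (𝓝 (h (U x))) := by
      simp only [heq]
      exact (h.continuous.tendsto _).comp (hbasis (U x))
    exact tendsto_nhds_unique h1 h2
  refine @IsEmbedding.mk E Λ (weakTop E) (weakTop Λ) _ (@IsInducing.mk E Λ (weakTop E) (weakTop Λ) _ ?_) ?_
  · rw [weakTop_eq E, weakTop_eq Λ, induced_iInf]
    simp only [induced_compose]
    refine le_antisymm (le_iInf fun h => ?_) (le_iInf fun f => ?_)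
    · exact iInf_le_of_le (h.comp U) (le_of_eq rfl)
    · obtain ⟨h, hh⟩ := key f
      refine iInf_le_of_le h (le_of_eq ?_)
      congr 1
      exact funext fun x => (hh x).symm
  · intro a b hab
    by_contra hne
    obtain ⟨f, hf⟩ := SeparatingDual.exists_separating_of_ne (R := ℝ) hne
    obtain ⟨h, hh⟩ := key f
    exact hf (by rw [hh a, hh b, hab])
end

section
/- Let E be a barrelled and complete locally convex space and Λ a barrelled sequence space whose unit vectors form a Schauder basis. Suppose (g_i) ⊆ E' is Λ-Bessel. Then (g_i) is a frame for E with respect to Λ (i.e., there exists continuous S : Λ → E with S ∘ U = id_E) if and only if there exists a sequence (f_i) ⊆ E such that Σ_i c_i f_i converges in E for every (c_i) ∈ Λ and x = Σ_i g_i(x) f_i for every x ∈ E. -/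
/-!
STATEMENT 10: Let `E` be barrelled and complete, `Λ` a barrelled sequence space whose unit
vectors form a Schauder basis, and `(g_i) ⊆ E'` `Λ`-Bessel with analysis operator `U`.
Then `(g_i)` is a frame for `E` with respect to `Λ` (there is a continuous linear
`S : Λ → E` with `S ∘ U = id_E`) iff there is a sequence `(f_i) ⊆ E` such that
`∑ c_i f_i` converges for every `(c_i) ∈ Λ` and `x = ∑ g_i(x) f_i` for every `x ∈ E`. -/

open Filter Topology

set_option maxHeartbeats 4000000

theorem stmt10 {E Λ : Type*}
    [AddCommGroup E] [Module ℝ E] [UniformSpace E] [IsUniformAddGroup E]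
    [ContinuousSMul ℝ E] [CompleteSpace E] [T2Space E] [LocallyConvexSpace ℝ E]
    [BarrelledSpace ℝ E]
    [AddCommGroup Λ] [Module ℝ Λ] [TopologicalSpace Λ] [IsTopologicalAddGroup Λ]
    [ContinuousSMul ℝ Λ] [T2Space Λ] [LocallyConvexSpace ℝ Λ] [BarrelledSpace ℝ Λ]
    (ι : Λ →L[ℝ] (ℕ → ℝ)) (hι : Function.Injective ι)
    (hφ : ∀ y : ℕ → ℝ, (Function.support y).Finite → ∃ a : Λ, ι a = y)
    (e : ℕ → Λ) (he : ∀ i, ι (e i) = Pi.single i 1)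
    (hbasis : ∀ a : Λ,
      Tendsto (fun n => ∑ i ∈ Finset.range n, ι a i • e i) atTop (𝓝 a))
    -- `(g_i)` is `Λ`-Bessel with analysis operator `U`
    (g : ℕ → E →L[ℝ] ℝ) (U : E →L[ℝ] Λ) (hUg : ∀ x i, ι (U x) i = g i x) :
    (∃ S : Λ →L[ℝ] E, S.comp U = ContinuousLinearMap.id ℝ E) ↔
    (∃ f : ℕ → E,
      (∀ c : Λ, ∃ l : E,
        Tendsto (fun n => ∑ i ∈ Finset.range n, ι c i • f i) atTop (𝓝 l)) ∧
      (∀ x : E,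
        Tendsto (fun n => ∑ i ∈ Finset.range n, g i x • f i) atTop (𝓝 x))) := by

  constructor
  · rintro ⟨S, hS⟩
    refine ⟨fun i => S (e i), fun c => ⟨S c, ?_⟩, fun x => ?_⟩
    · have := (S.continuous.tendsto c).comp (hbasis c)
      simpa [Function.comp_def, map_sum] using this
    · have := (S.continuous.tendsto (U x)).comp (hbasis (U x))
      have hx : S (U x) = x := by
        have := congrFun (congrArg DFunLike.coe hS) x
        simpa using this
      simpa [Function.comp_def, map_sum, hUg, hx] using this
  · rintro ⟨f, hconv, hrep⟩
    letI : UniformSpace Λ := IsTopologicalAddGroup.rightUniformSpace Λ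
    haveI : IsUniformAddGroup Λ := isUniformAddGroup_of_addCommGroup
    set T : ℕ → Λ →L[ℝ] E := fun n =>
      ∑ i ∈ Finset.range n, ((ContinuousLinearMap.proj i).comp ι).smulRight (f i) with hT
    have hTapp : ∀ n c, T n c = ∑ i ∈ Finset.range n, ι c i • f i := by
      intro n c
      simp [hT, ContinuousLinearMap.sum_apply]
    choose Sf hSf using hconv
    have htend : Tendsto (fun n c => T n c) atTop (𝓝 Sf) := by
      rw [tendsto_pi_nhds]
      intro c
      simpa [hTapp] using hSf c
    let S : Λ →L[ℝ] E :=
      WithSeminorms.continuousLinearMapOfTendsto (𝕜₁ := ℝ) (𝕜₂ := ℝ) (E := Λ) (F := E)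
        (with_gaugeSeminormFamily (𝕜 := ℝ) (E := E)) T htend
    have hSapp : ∀ c, S c = Sf c := fun c => by
      simp [S, WithSeminorms.continuousLinearMapOfTendsto, continuousLinearMapOfTendsto, linearMapOfTendsto]
    refine ⟨S, ?_⟩
    ext x
    have h1 : Tendsto (fun n => ∑ i ∈ Finset.range n, ι (U x) i • f i) atTop (𝓝 (Sf (U x))) :=
      hSf (U x)
    have h2 : Tendsto (fun n => ∑ i ∈ Finset.range n, ι (U x) i • f i) atTop (𝓝 x) := by
      simpa [hUg] using hrep x
    simpa [hSapp] using tendsto_nhds_unique h1 h2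
end

section
/- Let E be a barrelled and complete locally convex space, Λ a barrelled sequence space whose unit vectors form a Schauder basis, and (g_i) ⊆ E' a Λ-Bessel sequence which is a frame for E with respect to Λ, witnessed by a continuous S : Λ → E with S ∘ U = id_E. Set f_i := S(e_i). Then for every x' ∈ E', the sequence (x'(f_i))_i belongs to Λ' = Λ^β, and the map E'_β → Λ'_β, x' ↦ (x'(f_i))_i, is continuous; that is, (f_i), viewed in E'', is a Λ'-Bessel sequence for E'. -/
/-!
STATEMENT 11: Let `E` be barrelled and complete, `Λ` a barrelled sequence space whose unit
vectors form a Schauder basis, `(g_i) ⊆ E'` a `Λ`-Bessel sequence which is a frame for `E`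
with respect to `Λ`, witnessed by a continuous `S : Λ → E` with `S ∘ U = id_E`.
Set `f_i := S(e_i)`.  Then for every `x' ∈ E'` the sequence `(x'(f_i))_i` belongs to
`Λ' = Λ^β`, and the map `E'_β → Λ'_β`, `x' ↦ (x'(f_i))_i`, is continuous; that is,
`(f_i)`, viewed in `E''`, is a `Λ'`-Bessel sequence for `E'`.

Under the identification `Λ' ≅ Λ^β`, `h ↦ (h(e_i))_i`, the map `x' ↦ (x'(f_i))_i` is the
transpose `x' ↦ x' ∘ S`; the strong topologies `β(E',E)`, `β(Λ',Λ)` are the default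
topologies of `E →L[ℝ] ℝ` and `Λ →L[ℝ] ℝ` in Mathlib (uniform convergence on bounded
sets). -/

open Filter Topology

/-- The β-dual of the sequence space `Λ` embedded in `ω = ℝ^ℕ` by `ι`. -/
def betaDual {Λ : Type*} [AddCommGroup Λ] [Module ℝ Λ] [TopologicalSpace Λ]
    (ι : Λ →L[ℝ] (ℕ → ℝ)) : Set (ℕ → ℝ) :=
  {y | ∀ a : Λ, ∃ s : ℝ,
    Tendsto (fun n => ∑ i ∈ Finset.range n, ι a i * y i) atTop (𝓝 s)}

theorem stmt11 {E Λ : Type*}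
    [AddCommGroup E] [Module ℝ E] [UniformSpace E] [IsUniformAddGroup E]
    [ContinuousSMul ℝ E] [CompleteSpace E] [T2Space E] [LocallyConvexSpace ℝ E]
    [BarrelledSpace ℝ E]
    [AddCommGroup Λ] [Module ℝ Λ] [TopologicalSpace Λ] [IsTopologicalAddGroup Λ]
    [ContinuousSMul ℝ Λ] [T2Space Λ] [LocallyConvexSpace ℝ Λ] [BarrelledSpace ℝ Λ]
    (ι : Λ →L[ℝ] (ℕ → ℝ)) (hι : Function.Injective ι)
    (hφ : ∀ y : ℕ → ℝ, (Function.support y).Finite → ∃ a : Λ, ι a = y)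
    (e : ℕ → Λ) (he : ∀ i, ι (e i) = Pi.single i 1)
    (hbasis : ∀ a : Λ,
      Tendsto (fun n => ∑ i ∈ Finset.range n, ι a i • e i) atTop (𝓝 a))
    -- `(g_i)` is `Λ`-Bessel, a frame for `E` with respect to `Λ`, witnessed by `S`
    (g : ℕ → E →L[ℝ] ℝ) (U : E →L[ℝ] Λ) (hUg : ∀ x i, ι (U x) i = g i x)
    (S : Λ →L[ℝ] E) (hS : S.comp U = ContinuousLinearMap.id ℝ E)
    -- `f_i := S (e_i)`
    (f : ℕ → E) (hf : ∀ i, f i = S (e i)) :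
    (∀ x' : E →L[ℝ] ℝ, (fun i => x' (f i)) ∈ betaDual ι) ∧
      Continuous (fun x' : E →L[ℝ] ℝ => x'.comp S) := by
  constructor
  · intro x' a
    refine ⟨x' (S a), ?_⟩
    have h := ((x'.comp S).continuous.tendsto a).comp (hbasis a)
    refine h.congr fun n => ?_
    simp only [Function.comp, ContinuousLinearMap.coe_comp', map_sum, map_smul,
      smul_eq_mul]
    exact Finset.sum_congr rfl fun i _ => by rw [hf i]
  · exact (ContinuousLinearMap.precomp ℝ S).continuous
end
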